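/- Let ρ be an N×N complex positive semidefinite matrix with trace 1, let O be any N×N complex matrix, let k ≥ 1 be a natural number, and let p be a real polynomial with sup_{x ∈ [0,1]} |p(x) − x^{k−1}| ≤ η. Then |Tr(ρ · p(ρ) · O) − Tr(ρ^k · O)| ≤ ‖O‖ · η, where p(ρ) is the polynomial functional calculus applied to ρ and ‖O‖ is the ℓ²→ℓ² operator norm. -/

import Mathlib

open scoped ComplexOrder

/-- The ℓ²→ℓ² operator norm (largest singular value) of a complex `N × N` matrix. -/
noncomputable def l2OpNorm {N : ℕ} (M : Matrix (Fin N) (Fin N) ℂ) : ℝ :=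
  ‖LinearMap.toContinuousLinearMap (Matrix.toEuclideanLin M)‖

open scoped Matrix.Norms.L2Operator

/-- Conjugation by a unitary matrix as an `ℝ`-algebra homomorphism. -/
noncomputable def conjAH {N : ℕ} (U : Matrix.unitaryGroup (Fin N) ℂ) :
    Matrix (Fin N) (Fin N) ℂ →ₐ[ℝ] Matrix (Fin N) (Fin N) ℂ where
  toFun M := (U : Matrix (Fin N) (Fin N) ℂ) * M * star (U : Matrix (Fin N) (Fin N) ℂ)
  map_one' := by
    show (U : Matrix (Fin N) (Fin N) ℂ) * 1 * star (U : Matrix (Fin N) (Fin N) ℂ) = 1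
    rw [mul_one, Matrix.mem_unitaryGroup_iff.mp U.2]
  map_mul' A B := by
    show (U : Matrix (Fin N) (Fin N) ℂ) * (A * B) * star (U : Matrix (Fin N) (Fin N) ℂ) =
      ((U : Matrix (Fin N) (Fin N) ℂ) * A * star (U : Matrix (Fin N) (Fin N) ℂ)) *
      ((U : Matrix (Fin N) (Fin N) ℂ) * B * star (U : Matrix (Fin N) (Fin N) ℂ))
    have h : star (U : Matrix (Fin N) (Fin N) ℂ) * (U : Matrix (Fin N) (Fin N) ℂ) = 1 :=
      Matrix.mem_unitaryGroup_iff'.mp U.2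
    have h2 : ((U : Matrix (Fin N) (Fin N) ℂ) * A * star (U : Matrix (Fin N) (Fin N) ℂ)) *
      ((U : Matrix (Fin N) (Fin N) ℂ) * B * star (U : Matrix (Fin N) (Fin N) ℂ)) =
      (U : Matrix (Fin N) (Fin N) ℂ) * A *
        ((star (U : Matrix (Fin N) (Fin N) ℂ) * (U : Matrix (Fin N) (Fin N) ℂ)) *
          B) * star (U : Matrix (Fin N) (Fin N) ℂ) := by noncomm_ring
    rw [h2, h, one_mul]
    noncomm_ring
  map_zero' := by
    show (U : Matrix (Fin N) (Fin N) ℂ) * 0 * star (U : Matrix (Fin N) (Fin N) ℂ) = 0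
    rw [mul_zero, zero_mul]
  map_add' A B := by
    show (U : Matrix (Fin N) (Fin N) ℂ) * (A + B) * star (U : Matrix (Fin N) (Fin N) ℂ) = _
    noncomm_ring
  commutes' r := by
    show (U : Matrix (Fin N) (Fin N) ℂ) * (algebraMap ℝ (Matrix (Fin N) (Fin N) ℂ) r) *
        star (U : Matrix (Fin N) (Fin N) ℂ) = algebraMap ℝ (Matrix (Fin N) (Fin N) ℂ) r
    rw [← Algebra.commutes r (U : Matrix (Fin N) (Fin N) ℂ), mul_assoc,
      Matrix.mem_unitaryGroup_iff.mp U.2, mul_one]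

theorem trace_poly_approx_nonlinear_property {N : ℕ} (ρ O : Matrix (Fin N) (Fin N) ℂ)
    (hρ : ρ.PosSemidef) (htr : ρ.trace = 1) (k : ℕ) (hk : 1 ≤ k)
    (p : Polynomial ℝ) (η : ℝ)
    (hp : ∀ x ∈ Set.Icc (0 : ℝ) 1, |p.eval x - x ^ (k - 1)| ≤ η) :
    ‖(ρ * Polynomial.aeval ρ p * O).trace - (ρ ^ k * O).trace‖ ≤ l2OpNorm O * η := by
  classical
  have hH : ρ.IsHermitian := hρ.1
  set Usub := hH.eigenvectorUnitary with hUsub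
  set U : Matrix (Fin N) (Fin N) ℂ := (Usub : Matrix (Fin N) (Fin N) ℂ) with hUdef
  set lam : Fin N → ℝ := hH.eigenvalues with hlam
  set D : Matrix (Fin N) (Fin N) ℂ :=
    Matrix.diagonal (fun i => (lam i : ℂ)) with hD
  have hstarmul : star U * U = 1 := Matrix.mem_unitaryGroup_iff'.mp Usub.2
  have hspec : ρ = conjAH Usub D := by
    have := hH.spectral_theorem
    simpa [conjAH, hD, Function.comp_def, hlam, hUsub] using this
  -- eigenvalues facts
  have h0 : ∀ i, 0 ≤ lam i := fun i => hρ.eigenvalues_nonneg i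
  have hsumc : (∑ i, (lam i : ℂ)) = 1 := by
    have h : ρ.trace = ∑ i, (lam i : ℂ) := by
      rw [hspec]
      show (U * D * star U).trace = _
      rw [Matrix.trace_mul_cycle, hstarmul, one_mul]
      simp [hD, Matrix.trace_diagonal]
    rw [← h, htr]
  have hsum : (∑ i, lam i) = 1 := by
    exact_mod_cast hsumc
  have h1 : ∀ i, lam i ≤ 1 := by
    intro i
    rw [← hsum]
    exact Finset.single_le_sum (fun j _ => h0 j) (Finset.mem_univ i)
  -- polynomial evaluation on the diagonal
  have haevalD : Polynomial.aeval D p =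
      Matrix.diagonal (fun i => ((p.eval (lam i) : ℝ) : ℂ)) := by
    have hdag : D = Matrix.diagonalAlgHom ℝ (fun i => (lam i : ℂ)) := rfl
    have hfun : (Polynomial.aeval (fun j => (lam j : ℂ))) p
        = fun i => ((p.eval (lam i) : ℝ) : ℂ) := by
      funext i
      have h2 := Polynomial.aeval_algHom_apply
        (Pi.evalAlgHom ℝ (fun _ : Fin N => ℂ) i) (fun j => (lam j : ℂ)) p
      simp only [Pi.evalAlgHom_apply] at h2
      rw [← h2]
      have h3 : ((lam i : ℂ)) = algebraMap ℝ ℂ (lam i) := rfl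
      rw [h3, Polynomial.aeval_algebraMap_apply_eq_algebraMap_eval]
      rfl
    rw [hdag, Polynomial.aeval_algHom_apply, Matrix.diagonalAlgHom_apply, hfun]
  -- rewrite both traces
  have key : ρ * Polynomial.aeval ρ p - ρ ^ k =
      conjAH Usub (Matrix.diagonal
        (fun i => ((lam i * p.eval (lam i) - lam i ^ k : ℝ) : ℂ))) := by
    have h1' : Polynomial.aeval ρ p = conjAH Usub (Polynomial.aeval D p) := by
      rw [hspec, Polynomial.aeval_algHom_apply]
    rw [h1', hspec, ← map_mul, ← map_pow, ← map_sub]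
    congr 1
    rw [haevalD, hD]
    rw [Matrix.diagonal_mul_diagonal, Matrix.diagonal_pow, Matrix.diagonal_sub]
    ext i j
    by_cases h : i = j <;>
      simp [Matrix.diagonal_apply, h, Pi.pow_apply]
  set d : Fin N → ℂ := fun i => ((lam i * p.eval (lam i) - lam i ^ k : ℝ) : ℂ) with hd
  set B : Matrix (Fin N) (Fin N) ℂ := star U * O * U with hB
  have htrace : (ρ * Polynomial.aeval ρ p * O).trace - (ρ ^ k * O).trace =
      ∑ i, d i * B i i := by
    rw [← Matrix.trace_sub, ← Matrix.sub_mul, key]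
    show (U * Matrix.diagonal d * star U * O).trace = _
    rw [Matrix.trace_mul_cycle (U * Matrix.diagonal d) (star U) O, ← mul_assoc,
      Matrix.trace_mul_cycle (O * U) (Matrix.diagonal d) (star U),
      Matrix.trace_mul_comm, ← mul_assoc (star U) O U, ← hB]
    simp [Matrix.trace, Matrix.diag, Matrix.diagonal_mul]
  rw [htrace]
  -- norm of entries of B = star U * O * U
  have hBnorm : ‖B‖ = ‖O‖ := by
    rw [hB, mul_assoc]
    rw [CStarRing.norm_mem_unitary_mul (O * U) (Unitary.star_mem Usub.2),
      CStarRing.norm_mul_mem_unitary O Usub.2]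
  have coord : ∀ (y : EuclideanSpace ℂ (Fin N)) (i : Fin N), ‖y i‖ ≤ ‖y‖ := by
    intro y i
    rw [EuclideanSpace.norm_eq]
    have h4 : ‖y i‖ = Real.sqrt (‖y i‖ ^ 2) := (Real.sqrt_sq (norm_nonneg _)).symm
    rw [h4]
    exact Real.sqrt_le_sqrt (Finset.single_le_sum
      (f := fun j => ‖y j‖ ^ 2) (fun j _ => sq_nonneg _) (Finset.mem_univ i))
  have hentry : ∀ i, ‖B i i‖ ≤ ‖O‖ := by
    intro i
    rw [← hBnorm]
    have hx : ‖(EuclideanSpace.single i (1 : ℂ) : EuclideanSpace ℂ (Fin N))‖ = 1 := by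
      simp
    have hmv := B.l2_opNorm_mulVec (EuclideanSpace.single i (1 : ℂ))
    rw [hx, mul_one] at hmv
    refine le_trans ?_ hmv
    have hcomp : ((EuclideanSpace.equiv (Fin N) ℂ).symm <|
        B.mulVec (EuclideanSpace.single i (1 : ℂ))) i = B i i := by
      simp [Matrix.mulVec, dotProduct, EuclideanSpace.single_apply]
    rw [← hcomp]
    exact coord _ i
  -- final estimate
  have hO : l2OpNorm O = ‖O‖ := rfl
  rw [hO]
  calc ‖∑ i, d i * B i i‖
      ≤ ∑ i, ‖d i * B i i‖ := norm_sum_le _ _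
    _ ≤ ∑ i, (lam i * η) * ‖O‖ := by
        refine Finset.sum_le_sum fun i _ => ?_
        rw [norm_mul, hd, Complex.norm_real, Real.norm_eq_abs]
        have habs : |lam i * p.eval (lam i) - lam i ^ k| ≤ lam i * η := by
          have hfac : lam i ^ k = lam i * lam i ^ (k - 1) := by
            nth_rewrite 1 [show k = 1 + (k - 1) by omega]
            rw [pow_add, pow_one]
          rw [hfac, ← mul_sub, abs_mul, abs_of_nonneg (h0 i)]
          exact mul_le_mul_of_nonneg_left (hp (lam i) ⟨h0 i, h1 i⟩) (h0 i)
        exact mul_le_mul habs (hentry i) (norm_nonneg _)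
          (le_trans (abs_nonneg _) habs)
    _ = ‖O‖ * η := by
        rw [← Finset.sum_mul, ← Finset.sum_mul, hsum]
        ring
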